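/- Multiplication formula: for any positive integer w, any x ∈ R, and any n ≥ 0: w · B_{n,q}(w·x) = w^n · Σ_{i=0}^{w−1} q^i · B_{n,q^w}(x + i/w). -/

import Mathlib

open Finset

/-- The q-analogue of power sums: `S_{k,q}(m) = Σ_{i=0}^m i^k q^i` (with `0^0 = 1`). -/
def qS {R : Type*} [CommRing R] (q : R) (k m : ℕ) : R :=
  ∑ i ∈ Finset.range (m + 1), (i : R) ^ k * q ^ i

/-- q-Bernoulli numbers `b_n(q, L)`: `(q-1) b_0 = L` and for `n ≥ 1`,
`(q-1) b_n = [n = 1] - q Σ_{k<n} C(n,k) b_k`. -/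
noncomputable def qb {R : Type*} [CommRing R] (q L : R) : ℕ → R
  | 0 => Ring.inverse (q - 1) * L
  | n + 1 =>
      Ring.inverse (q - 1) *
        ((if n + 1 = 1 then (1 : R) else 0) -
          q * ∑ k ∈ (Finset.range (n + 1)).attach,
              ((n + 1).choose k.1 : R) * qb q L k.1)
  termination_by n => n
  decreasing_by exact Finset.mem_range.mp k.2

/-- q-Bernoulli polynomials `B_{n,q}(x) = Σ_{k=0}^n C(n,k) b_k(q,L) x^{n-k}`. -/
noncomputable def qB {R : Type*} [CommRing R] (q L : R) (n : ℕ) (x : R) : R :=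
  ∑ k ∈ Finset.range (n + 1), (n.choose k : R) * qb q L k * x ^ (n - k)

section PolyOf
variable {R : Type*} [CommRing R]

/-- Generic "umbral" polynomial attached to a sequence `a`. -/
def polyOf (a : ℕ → R) (n : ℕ) (x : R) : R :=
  ∑ j ∈ Finset.range (n + 1), (n.choose j : R) * a j * x ^ (n - j)

lemma polyOf_add (a : ℕ → R) (n : ℕ) (x y : R) :
    polyOf a n (x + y)
      = ∑ m ∈ Finset.range (n + 1), (n.choose m : R) * polyOf a m y * x ^ (n - m) := by
  unfold polyOf
  have h1 : ∀ j ∈ Finset.range (n + 1),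
      (n.choose j : R) * a j * (x + y) ^ (n - j)
        = ∑ t ∈ Finset.range (n - j + 1),
            (n.choose j : R) * a j * (y ^ t * x ^ (n - j - t) * ((n - j).choose t : R)) := by
    intro j hj
    rw [add_comm x y, add_pow, Finset.mul_sum]
  have h2 : ∀ m ∈ Finset.range (n + 1),
      (n.choose m : R) * (∑ j ∈ Finset.range (m + 1), (m.choose j : R) * a j * y ^ (m - j)) * x ^ (n - m)
        = ∑ j ∈ Finset.range (m + 1),
            (n.choose m : R) * ((m.choose j : R) * a j * y ^ (m - j)) * x ^ (n - m) := by
    intro m hm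
    rw [Finset.mul_sum, Finset.sum_mul]
  rw [Finset.sum_congr rfl h1, Finset.sum_congr rfl h2]
  rw [Finset.sum_sigma', Finset.sum_sigma']
  refine Finset.sum_nbij' (fun p => ⟨p.1 + p.2, p.1⟩) (fun p => ⟨p.2, p.1 - p.2⟩) ?_ ?_ ?_ ?_ ?_
  · rintro ⟨j, t⟩ h
    simp only [Finset.mem_sigma, Finset.mem_range] at h ⊢
    omega
  · rintro ⟨m, j⟩ h
    simp only [Finset.mem_sigma, Finset.mem_range] at h ⊢
    omega
  · rintro ⟨j, t⟩ h
    simp only [Finset.mem_sigma, Finset.mem_range] at h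
    simp only [Sigma.mk.inj_iff, heq_eq_eq, true_and, and_true]
    omega
  · rintro ⟨m, j⟩ h
    simp only [Finset.mem_sigma, Finset.mem_range] at h
    simp only [Sigma.mk.inj_iff, heq_eq_eq, true_and, and_true]
    omega
  · rintro ⟨j, t⟩ h
    simp only [Finset.mem_sigma, Finset.mem_range] at h
    obtain ⟨hj, ht⟩ := h
    have hjt : j + t ≤ n := by omega
    have hch : (n.choose (j + t)) * ((j + t).choose j) = n.choose j * ((n - j).choose t) := by
      rw [Nat.choose_mul (Nat.le_add_right j t), Nat.add_sub_cancel_left]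
    have h3 : n - j - t = n - (j + t) := by omega
    have h4 : j + t - j = t := by omega
    have hchR : ((n.choose (j + t) : R)) * ((j + t).choose j : R)
        = (n.choose j : R) * ((n - j).choose t : R) := by
      exact_mod_cast congrArg (fun z : ℕ => (z : R)) hch
    rw [h3, h4]
    calc (n.choose j : R) * a j * (y ^ t * x ^ (n - (j + t)) * ((n - j).choose t : R))
        = ((n.choose j : R) * ((n - j).choose t : R)) * (a j * y ^ t * x ^ (n - (j + t))) := by ring
      _ = ((n.choose (j + t) : R)) * ((j + t).choose j : R) * (a j * y ^ t * x ^ (n - (j + t))) := by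
            rw [hchR]
      _ = (n.choose (j + t) : R) * (((j + t).choose j : R) * a j * y ^ t) * x ^ (n - (j + t)) := by
            ring

variable (q L : R)

lemma qb_succ (n : ℕ) :
    qb q L (n + 1) = Ring.inverse (q - 1) *
      ((if n + 1 = 1 then (1 : R) else 0) -
        q * ∑ k ∈ Finset.range (n + 1), ((n + 1).choose k : R) * qb q L k) := by
  rw [qb, Finset.sum_attach (Finset.range (n + 1)) (fun k => ((n + 1).choose k : R) * qb q L k)]

lemma qb_rec (hu : IsUnit (q - 1)) (n : ℕ) :
    (q - 1) * qb q L (n + 1) =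
      (if n + 1 = 1 then (1 : R) else 0) -
        q * ∑ k ∈ Finset.range (n + 1), ((n + 1).choose k : R) * qb q L k := by
  rw [qb_succ, ← mul_assoc, Ring.mul_inverse_cancel _ hu, one_mul]

lemma qb_zero_rec (hu : IsUnit (q - 1)) : (q - 1) * qb q L 0 = L := by
  rw [qb, ← mul_assoc, Ring.mul_inverse_cancel _ hu, one_mul]

lemma qb_sum (hu : IsUnit (q - 1)) (n : ℕ) :
    q * ∑ k ∈ Finset.range (n + 1), (n.choose k : R) * qb q L k
      = qb q L n + (if n = 1 then (1 : R) else 0) + (if n = 0 then L else 0) := by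
  cases n with
  | zero =>
      have h := qb_zero_rec q L hu
      simp only [zero_add, Finset.sum_range_one, Nat.choose_self, Nat.cast_one, one_mul,
        if_neg (by norm_num : (0:ℕ) ≠ 1), if_pos rfl, if_true, add_zero, zero_add]
      linear_combination h
  | succ m =>
      have hb := qb_rec q L hu m
      rw [Finset.sum_range_succ, Nat.choose_self, Nat.cast_one, one_mul]
      simp only [if_neg (Nat.succ_ne_zero m), add_zero]
      linear_combination hb

lemma qB_shift (hu : IsUnit (q - 1)) (n : ℕ) (x : R) :
    q * qB q L n (x + 1) = qB q L n x + (n : R) * x ^ (n - 1) + L * x ^ n := by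
  rw [show qB q L n (x + 1) = polyOf (qb q L) n (x + 1) from rfl, polyOf_add, Finset.mul_sum]
  have key : ∀ m ∈ Finset.range (n + 1),
      q * ((n.choose m : R) * polyOf (qb q L) m 1 * x ^ (n - m))
        = (n.choose m : R) * qb q L m * x ^ (n - m)
          + (if m = 1 then (n : R) * x ^ (n - 1) else 0)
          + (if m = 0 then L * x ^ n else 0) := by
    intro m hm
    rw [Finset.mem_range] at hm
    have hone : polyOf (qb q L) m 1 = ∑ k ∈ Finset.range (m + 1), (m.choose k : R) * qb q L k := by
      simp [polyOf]
    have hs := qb_sum q L hu m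
    calc q * ((n.choose m : R) * polyOf (qb q L) m 1 * x ^ (n - m))
        = (n.choose m : R) * (q * ∑ k ∈ Finset.range (m + 1), (m.choose k : R) * qb q L k)
            * x ^ (n - m) := by rw [hone]; ring
      _ = (n.choose m : R) * (qb q L m + (if m = 1 then (1 : R) else 0)
            + (if m = 0 then L else 0)) * x ^ (n - m) := by rw [hs]
      _ = _ := by
          rcases eq_or_ne m 1 with h1 | h1
          · subst h1
            simp [Nat.choose_one_right]
            ring
          · rcases eq_or_ne m 0 with h0 | h0
            · subst h0
              simp
              ring
            · simp only [if_neg h1, if_neg h0, add_zero]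
  have e1 : ∑ m ∈ Finset.range (n + 1), (if m = 1 then (n : R) * x ^ (n - 1) else 0)
      = (n : R) * x ^ (n - 1) := by
    rw [Finset.sum_ite_eq' (Finset.range (n + 1)) 1 (fun _ => (n : R) * x ^ (n - 1))]
    split_ifs with h
    · rfl
    · rw [Finset.mem_range] at h
      have hn : n = 0 := by omega
      subst hn; simp
  have e2 : ∑ m ∈ Finset.range (n + 1), (if m = 0 then L * x ^ n else 0) = L * x ^ n := by
    rw [Finset.sum_ite_eq' (Finset.range (n + 1)) 0 (fun _ => L * x ^ n)]
    exact if_pos (Finset.mem_range.mpr (Nat.succ_pos n))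
  rw [Finset.sum_congr rfl key, Finset.sum_add_distrib, Finset.sum_add_distrib, e1, e2]
  rfl

lemma polyOf_scale (a : ℕ → R) (n : ℕ) (u v y : R) (huv : u * v = 1) :
    ∑ k ∈ Finset.range (n + 1), (n.choose k : R) * (u ^ k * polyOf a k y)
      = u ^ n * polyOf a n (y + v) := by
  have h1 : ∀ k ∈ Finset.range (n + 1), (n.choose k : R) * (u ^ k * polyOf a k y)
      = (n.choose k : R) * polyOf (fun j => u ^ j * a j) k (u * y) * 1 ^ (n - k) := by
    intro k hk
    rw [one_pow, mul_one]
    congr 1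
    unfold polyOf
    rw [Finset.mul_sum]
    refine Finset.sum_congr rfl fun j hj => ?_
    rw [Finset.mem_range] at hj
    have hu : u ^ k = u ^ j * u ^ (k - j) := by rw [← pow_add]; congr 1; omega
    rw [hu, mul_pow]
    ring
  rw [Finset.sum_congr rfl h1, ← polyOf_add]
  unfold polyOf
  rw [Finset.mul_sum]
  refine Finset.sum_congr rfl fun j hj => ?_
  rw [Finset.mem_range] at hj
  have h2 : (1 : R) + u * y = u * (y + v) := by linear_combination -huv
  rw [h2, mul_pow]
  have hu : u ^ n = u ^ j * u ^ (n - j) := by rw [← pow_add]; congr 1; omega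
  rw [hu]
  ring

end PolyOf

section Rat
variable {R : Type*} [CommRing R] [Algebra ℚ R]

/-- `i/w` as an element of `R`. -/
noncomputable def xiw (w i : ℕ) : R := algebraMap ℚ R ((i : ℚ) / (w : ℚ))

/-- `1/w` as an element of `R`. -/
noncomputable def Winv (w : ℕ) : R := algebraMap ℚ R (1 / (w : ℚ))

variable {w : ℕ}

lemma natCast_mul_Winv (hw : 0 < w) : (w : R) * Winv w = 1 := by
  have hwq : ((w : ℚ)) ≠ 0 := by exact_mod_cast hw.ne'
  calc (w : R) * Winv w = algebraMap ℚ R ((w : ℚ) * (1 / (w : ℚ))) := by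
        rw [map_mul, map_natCast]; rfl
    _ = 1 := by rw [mul_one_div_cancel hwq, map_one]

lemma xiw_zero : (xiw w 0 : R) = 0 := by simp [xiw]

lemma xiw_self (hw : 0 < w) : (xiw w w : R) = 1 := by
  have hwq : ((w : ℚ)) ≠ 0 := by exact_mod_cast hw.ne'
  simp [xiw, div_self hwq]

lemma xiw_succ (i : ℕ) : (xiw w (i + 1) : R) = xiw w i + Winv w := by
  rw [xiw, xiw, Winv, ← map_add]
  congr 1
  push_cast
  rw [add_div]

end Rat

section Star
variable {R : Type*} [CommRing R] [Algebra ℚ R]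

lemma csum (q L : R) (w : ℕ) (hw : 0 < w) (huw : IsUnit (q ^ w - 1)) (n : ℕ) :
    q * ∑ k ∈ Finset.range (n + 1 + 1), ((n + 1).choose k : R) *
        ((w : R) ^ k * Winv w * ∑ i ∈ Finset.range w, q ^ i * qB (q ^ w) ((w : R) * L) k (xiw w i))
      = (w : R) ^ (n + 1) * Winv w *
          (∑ i ∈ Finset.range w, q ^ i * qB (q ^ w) ((w : R) * L) (n + 1) (xiw w i))
        + (if n + 1 = 1 then (1 : R) else 0) := by
  have hwW : (w : R) * Winv w = 1 := natCast_mul_Winv hw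
  have A : q * ∑ k ∈ Finset.range (n + 1 + 1), ((n + 1).choose k : R) *
        ((w : R) ^ k * Winv w * ∑ i ∈ Finset.range w, q ^ i * qB (q ^ w) ((w : R) * L) k (xiw w i))
      = ∑ i ∈ Finset.range w, (Winv w * q ^ (i + 1)) *
          ∑ k ∈ Finset.range (n + 1 + 1), ((n + 1).choose k : R) *
            ((w : R) ^ k * qB (q ^ w) ((w : R) * L) k (xiw w i)) := by
    simp only [Finset.mul_sum]
    rw [Finset.sum_comm]
    exact Finset.sum_congr rfl fun k _ => Finset.sum_congr rfl fun i _ => by ring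
  have B1 : ∀ i ∈ Finset.range w,
      ∑ k ∈ Finset.range (n + 1 + 1), ((n + 1).choose k : R) *
          ((w : R) ^ k * qB (q ^ w) ((w : R) * L) k (xiw w i))
        = (w : R) ^ (n + 1) * qB (q ^ w) ((w : R) * L) (n + 1) (xiw w i + Winv w) := by
    intro i _
    exact polyOf_scale (qb (q ^ w) ((w : R) * L)) (n + 1) (w : R) (Winv w) (xiw w i) hwW
  have A2 : ∑ i ∈ Finset.range w, (Winv w * q ^ (i + 1)) *
        ∑ k ∈ Finset.range (n + 1 + 1), ((n + 1).choose k : R) *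
          ((w : R) ^ k * qB (q ^ w) ((w : R) * L) k (xiw w i))
      = (w : R) ^ (n + 1) * Winv w *
          ∑ i ∈ Finset.range w, q ^ (i + 1) * qB (q ^ w) ((w : R) * L) (n + 1) (xiw w (i + 1)) := by
    rw [Finset.mul_sum]
    refine Finset.sum_congr rfl fun i hi => ?_
    rw [B1 i hi, ← xiw_succ]
    ring
  set F : ℕ → R := fun i => q ^ i * qB (q ^ w) ((w : R) * L) (n + 1) (xiw w i) with hF
  have hT : ∑ i ∈ Finset.range w, F (i + 1) = (∑ i ∈ Finset.range w, F i) + F w - F 0 := by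
    have h1 := Finset.sum_range_succ' F w
    have h2 := Finset.sum_range_succ F w
    linear_combination h2 - h1
  have hD : F w - F 0 = (if n + 1 = 1 then (1 : R) else 0) := by
    have hsh := qB_shift (q ^ w) ((w : R) * L) huw (n + 1) 0
    rw [zero_add] at hsh
    have hFw : F w = q ^ w * qB (q ^ w) ((w : R) * L) (n + 1) 1 := by
      rw [hF]; simp only [xiw_self hw]
    have hF0 : F 0 = qB (q ^ w) ((w : R) * L) (n + 1) 0 := by
      rw [hF]; simp only [xiw_zero, pow_zero, one_mul]
    rw [hFw, hF0]
    cases n with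
    | zero =>
        rw [if_pos rfl]
        norm_num at hsh
        linear_combination hsh
    | succ m =>
        have hne : m + 1 + 1 ≠ 1 := by omega
        rw [if_neg hne]
        have hz1 : (0 : R) ^ (m + 1 + 1 - 1) = 0 := zero_pow (by omega)
        have hz2 : (0 : R) ^ (m + 1 + 1) = 0 := zero_pow (by omega)
        rw [hz1, hz2] at hsh
        linear_combination hsh
  rw [A, A2]
  have hT2 : ∑ i ∈ Finset.range w, q ^ (i + 1) * qB (q ^ w) ((w : R) * L) (n + 1) (xiw w (i + 1))
      = (∑ i ∈ Finset.range w, F i) + F w - F 0 := hT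
  rw [hT2]
  cases n with
  | zero =>
      rw [if_pos rfl] at hD ⊢
      linear_combination ((w : R) * Winv w) * hD + hwW
  | succ m =>
      have hne : m + 1 + 1 ≠ 1 := by omega
      rw [if_neg hne] at hD ⊢
      linear_combination ((w : R) ^ (m + 1 + 1) * Winv w) * hD
end Star

section MainLemmas
variable {R : Type*} [CommRing R] [Algebra ℚ R]

lemma qb_star (q L : R) (hq : ∀ w : ℕ, 0 < w → IsUnit (q ^ w - 1)) (w : ℕ) (hw : 0 < w)
    (m : ℕ) :
    qb q L m = (w : R) ^ m * Winv w *
      ∑ i ∈ Finset.range w, q ^ i * qB (q ^ w) ((w : R) * L) m (xiw w i) := by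
  have hu1 : IsUnit (q - 1) := by
    have := hq 1 Nat.one_pos
    rwa [pow_one] at this
  have huw : IsUnit (q ^ w - 1) := hq w hw
  have hwW : (w : R) * Winv w = 1 := natCast_mul_Winv hw
  induction m using Nat.strong_induction_on with
  | _ m IH =>
    apply hu1.mul_left_cancel
    cases m with
    | zero =>
        rw [qb_zero_rec q L hu1]
        have hB0 : ∀ i ∈ Finset.range w, q ^ i * qB (q ^ w) ((w : R) * L) 0 (xiw w i)
            = q ^ i * qb (q ^ w) ((w : R) * L) 0 := by
          intro i _
          congr 1
          simp [qB]
        rw [Finset.sum_congr rfl hB0, ← Finset.sum_mul]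
        have h2 := geom_sum_mul q w
        have h3 := qb_zero_rec (q ^ w) ((w : R) * L) huw
        linear_combination (-(Winv w * qb (q ^ w) ((w : R) * L) 0)) * h2 - Winv w * h3 - L * hwW
    | succ n =>
        rw [qb_rec q L hu1 n]
        have hsum : ∑ k ∈ Finset.range (n + 1), ((n + 1).choose k : R) * qb q L k
            = ∑ k ∈ Finset.range (n + 1), ((n + 1).choose k : R) *
                ((w : R) ^ k * Winv w *
                  ∑ i ∈ Finset.range w, q ^ i * qB (q ^ w) ((w : R) * L) k (xiw w i)) := by
          refine Finset.sum_congr rfl fun k hk => ?_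
          rw [IH k (Finset.mem_range.mp hk)]
        rw [hsum]
        have hc := csum q L w hw huw n
        have hsplit := Finset.sum_range_succ (fun k => ((n + 1).choose k : R) *
            ((w : R) ^ k * Winv w *
              ∑ i ∈ Finset.range w, q ^ i * qB (q ^ w) ((w : R) * L) k (xiw w i))) (n + 1)
        simp only [Nat.choose_self, Nat.cast_one, one_mul] at hsplit
        linear_combination -hc + q * hsplit
end MainLemmas

theorem qBernoulli_multiplication {R : Type*} [CommRing R] [Algebra ℚ R] (q L : R)
    (hq : ∀ w : ℕ, 0 < w → IsUnit (q ^ w - 1)) (w : ℕ) (hw : 0 < w) (x : R) (n : ℕ) :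
    (w : R) * qB q L n ((w : R) * x)
      = (w : R) ^ n * ∑ i ∈ Finset.range w, q ^ i *
          qB (q ^ w) ((w : R) * L) n (x + algebraMap ℚ R ((i : ℚ) / (w : ℚ))) := by
  have hwW : (w : R) * Winv w = 1 := natCast_mul_Winv hw
  have hstar := qb_star q L hq w hw
  conv_lhs => rw [show qB q L n ((w : R) * x)
      = ∑ m ∈ Finset.range (n + 1), (n.choose m : R) * qb q L m * ((w : R) * x) ^ (n - m)
      from rfl]
  rw [Finset.mul_sum]
  have hterm : ∀ m ∈ Finset.range (n + 1),
      (w : R) * ((n.choose m : R) * qb q L m * ((w : R) * x) ^ (n - m))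
        = ∑ i ∈ Finset.range w, (n.choose m : R) * ((w : R) ^ n *
            (q ^ i * qB (q ^ w) ((w : R) * L) m (xiw w i) * x ^ (n - m))) := by
    intro m hm
    rw [Finset.mem_range] at hm
    rw [hstar m, mul_pow]
    simp only [Finset.mul_sum, Finset.sum_mul]
    refine Finset.sum_congr rfl fun i _ => ?_
    have e0 : (w : R) ^ m * (w : R) ^ (n - m) = (w : R) ^ n := by
      rw [← pow_add]; congr 1; omega
    calc (w : R) * ((n.choose m : R) * ((w : R) ^ m * Winv w *
            (q ^ i * qB (q ^ w) ((w : R) * L) m (xiw w i))) * ((w : R) ^ (n - m) * x ^ (n - m)))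
        = ((w : R) * Winv w) * ((w : R) ^ m * (w : R) ^ (n - m)) *
            ((n.choose m : R) * (q ^ i * qB (q ^ w) ((w : R) * L) m (xiw w i)) * x ^ (n - m)) := by
          ring
      _ = _ := by rw [hwW, e0]; ring
  rw [Finset.sum_congr rfl hterm, Finset.sum_comm]
  conv_rhs => rw [Finset.mul_sum]
  refine Finset.sum_congr rfl fun i _ => ?_
  rw [show (algebraMap ℚ R ((i : ℚ) / (w : ℚ))) = xiw w i from rfl]
  rw [show qB (q ^ w) ((w : R) * L) n (x + xiw w i)
      = polyOf (qb (q ^ w) ((w : R) * L)) n (x + xiw w i) from rfl, polyOf_add]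
  have hPB : ∀ (m : ℕ) (y : R), polyOf (qb (q ^ w) ((w : R) * L)) m y
      = qB (q ^ w) ((w : R) * L) m y := fun _ _ => rfl
  simp only [hPB, Finset.mul_sum]
  refine Finset.sum_congr rfl fun m _ => ?_
  ring
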